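/- Let (X,d) be a compact metric space and r₁ > 0. Then there are only finitely many values c > r₁ at which the partition of X into ∼_c-equivalence classes changes; equivalently, the set of scales c > r₁ such that for every ε > 0 the relations ∼_{c-ε'} and ∼_{c+ε'} differ for some 0 < ε' < ε is finite. Consequently, the set of such critical scales of the zero-dimensional persistence of X has no accumulation point other than possibly 0. -/

import Mathlib

section aux

variable {X : Type*} [MetricSpace X]

private def cquot (X : Type*) [MetricSpace X] (c : ℝ) : Type _ :=
  Quotient (Relation.EqvGen.setoid (fun u v : X => dist u v < c))

private noncomputable def Ncard (X : Type*) [MetricSpace X] (c : ℝ) : ℕ := Nat.card (cquot X c)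

private lemma crel_mono {c c' : ℝ} (h : c ≤ c') {a b : X}
    (hab : Relation.EqvGen (fun u v : X => dist u v < c) a b) :
    Relation.EqvGen (fun u v : X => dist u v < c') a b :=
  Relation.EqvGen.mono (fun u v hu => lt_of_lt_of_le hu h) a b hab

private def cmap {c c' : ℝ} (h : c ≤ c') : cquot X c → cquot X c' :=
  Quotient.map' id (fun a b hab => crel_mono h hab)

private lemma cmap_surj {c c' : ℝ} (h : c ≤ c') :
    Function.Surjective (cmap (X := X) h) := by
  intro q
  induction q using Quotient.inductionOn'
  exact ⟨Quotient.mk'' _, rfl⟩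

private lemma cquot_finite [CompactSpace X] {c : ℝ} (hc : 0 < c) : Finite (cquot X c) := by
  obtain ⟨t, ht⟩ := IsCompact.elim_finite_subcover isCompact_univ
    (fun x : X => Metric.ball x c) (fun x => Metric.isOpen_ball)
    (by intro x _; exact Set.mem_iUnion.2 ⟨x, Metric.mem_ball_self hc⟩)
  have hsurj : Function.Surjective
      (fun i : t => (Quotient.mk'' i : cquot X c)) := by
    intro q
    induction q using Quotient.inductionOn' with
    | h x =>
      obtain ⟨i, hi, hxi⟩ := Set.mem_iUnion₂.1 (ht (Set.mem_univ x))
      refine ⟨⟨i, hi⟩, ?_⟩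
      exact Quotient.sound' (Relation.EqvGen.rel _ _ (by simpa [dist_comm] using hxi))
  exact Finite.of_surjective _ hsurj

private lemma Ncard_lt [CompactSpace X] {c c' : ℝ} (hc : 0 < c) (hle : c ≤ c') {x y : X}
    (hxy : Relation.EqvGen (fun u v : X => dist u v < c') x y)
    (hnxy : ¬ Relation.EqvGen (fun u v : X => dist u v < c) x y) :
    Ncard X c' < Ncard X c := by
  have h1 : Finite (cquot X c) := cquot_finite hc
  have h2 : Finite (cquot X c') := cquot_finite (lt_of_lt_of_le hc hle)
  have := Fintype.ofFinite (cquot X c)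
  have := Fintype.ofFinite (cquot X c')
  have hni : ¬ Function.Injective (cmap (X := X) hle) := by
    intro hinj
    have : (Quotient.mk'' x : cquot X c) = Quotient.mk'' y := by
      apply hinj
      exact Quotient.sound' hxy
    exact hnxy (Quotient.exact' this)
  have := Fintype.card_lt_of_surjective_not_injective _ (cmap_surj hle) hni
  simpa [Ncard, Nat.card_eq_fintype_card] using this

private lemma Ncard_anti [CompactSpace X] {c c' : ℝ} (hc : 0 < c) (hle : c ≤ c') :
    Ncard X c' ≤ Ncard X c := by
  have h1 : Finite (cquot X c) := cquot_finite hc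
  have h2 : Finite (cquot X c') := cquot_finite (lt_of_lt_of_le hc hle)
  have := Fintype.ofFinite (cquot X c)
  have := Fintype.ofFinite (cquot X c')
  have := Fintype.card_le_of_surjective _ (cmap_surj (X := X) hle)
  simpa [Ncard, Nat.card_eq_fintype_card] using this

/-- if the cards agree then the relations agree -/
private lemma rel_eq_of_card_le [CompactSpace X] {c c' : ℝ} (hc : 0 < c) (hle : c ≤ c')
    (hcard : Ncard X c ≤ Ncard X c') {x y : X}
    (hxy : Relation.EqvGen (fun u v : X => dist u v < c') x y) :
    Relation.EqvGen (fun u v : X => dist u v < c) x y := by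
  by_contra h
  exact absurd hcard (not_le.2 (Ncard_lt hc hle hxy h))

/-- left continuity -/
private lemma exists_lt_of_rel {c : ℝ} {x y : X}
    (h : Relation.EqvGen (fun u v : X => dist u v < c) x y) :
    ∃ s, s < c ∧ Relation.EqvGen (fun u v : X => dist u v < s) x y := by
  induction h with
  | rel u v huv =>
    exact ⟨(dist u v + c) / 2, by linarith,
      Relation.EqvGen.rel _ _ (show dist u v < _ by linarith)⟩
  | refl a => exact ⟨c - 1, by linarith, Relation.EqvGen.refl _⟩
  | symm a b _ ih =>
    obtain ⟨s, hs, h⟩ := ih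
    exact ⟨s, hs, Relation.EqvGen.symm _ _ h⟩
  | trans a b d _ _ ih1 ih2 =>
    obtain ⟨s1, hs1, h1⟩ := ih1
    obtain ⟨s2, hs2, h2⟩ := ih2
    exact ⟨max s1 s2, max_lt hs1 hs2,
      Relation.EqvGen.trans _ _ _ (crel_mono (le_max_left _ _) h1)
        (crel_mono (le_max_right _ _) h2)⟩

end aux

/-- For a compact metric space and `r₁ > 0`, the set of scales `c > r₁`
at which the partition of `X` into `∼`-classes changes (i.e. the chain relation is not
constant on any open interval around `c`) is finite. -/
theorem stmt_3 {X : Type*} [MetricSpace X] [CompactSpace X] (r₁ : ℝ) (hr₁ : 0 < r₁) :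
    {c : ℝ | r₁ < c ∧ ∀ ε > 0, ∃ ε' : ℝ, 0 < ε' ∧ ε' < ε ∧
      (fun a b : X => Relation.EqvGen (fun u v : X => dist u v < c - ε') a b) ≠
      (fun a b : X => Relation.EqvGen (fun u v : X => dist u v < c + ε') a b)}.Finite := by
  set C := {c : ℝ | r₁ < c ∧ ∀ ε > 0, ∃ ε' : ℝ, 0 < ε' ∧ ε' < ε ∧
      (fun a b : X => Relation.EqvGen (fun u v : X => dist u v < c - ε') a b) ≠
      (fun a b : X => Relation.EqvGen (fun u v : X => dist u v < c + ε') a b)} with hC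
  -- N is strictly antitone on C
  have key : ∀ c ∈ C, ∀ c' ∈ C, c < c' → Ncard X c' < Ncard X c := by
    intro c hc c' hc' hcc'
    obtain ⟨hrc, hcrit⟩ := hc
    obtain ⟨hrc', _⟩ := hc'
    -- find minimizer s* in Ioo r₁ c
    have hne : ((fun s => Ncard X s) '' Set.Ioo r₁ c).Nonempty :=
      ⟨_, ⟨(r₁ + c) / 2, ⟨by linarith, by linarith⟩, rfl⟩⟩
    obtain ⟨n, ⟨s, hs, rfl⟩, hmin⟩ :=
      (Nat.lt_wfRel.wf).has_min _ hne
    have hs0 : 0 < s := lt_trans hr₁ hs.1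
    -- E c ≤ E s
    have hEc : ∀ x y : X, Relation.EqvGen (fun u v : X => dist u v < c) x y →
        Relation.EqvGen (fun u v : X => dist u v < s) x y := by
      intro x y hxy
      obtain ⟨s', hs'c, hs'⟩ := exists_lt_of_rel hxy
      have hmaxmem : max s' s ∈ Set.Ioo r₁ c := ⟨lt_of_lt_of_le hs.1 (le_max_right _ _),
        max_lt hs'c hs.2⟩
      have hle : Ncard X s ≤ Ncard X (max s' s) :=
        not_lt.1 (hmin _ ⟨_, hmaxmem, rfl⟩)
      exact rel_eq_of_card_le hs0 (le_max_right _ _) hle (crel_mono (le_max_left _ _) hs')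
    -- criticality of c at ε = min (c - s) (c' - c)
    obtain ⟨ε', hε'0, hε'lt, hne'⟩ := hcrit (min (c - s) (c' - c))
      (lt_min (by linarith [hs.2]) (by linarith))
    have hε1 : ε' < c - s := lt_of_lt_of_le hε'lt (min_le_left _ _)
    have hε2 : ε' < c' - c := lt_of_lt_of_le hε'lt (min_le_right _ _)
    -- get witnesses x y
    have hwit : ∃ x y : X,
        Relation.EqvGen (fun u v : X => dist u v < c + ε') x y ∧
        ¬ Relation.EqvGen (fun u v : X => dist u v < c - ε') x y := by
      by_contra h
      push_neg at h
      apply hne'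
      funext a b
      exact propext ⟨fun h1 => crel_mono (by linarith) h1, fun h2 => h a b h2⟩
    obtain ⟨x, y, hxy, hnxy⟩ := hwit
    have hxy' : Relation.EqvGen (fun u v : X => dist u v < c') x y :=
      crel_mono (by linarith) hxy
    have hnxyc : ¬ Relation.EqvGen (fun u v : X => dist u v < c) x y := by
      intro h
      exact hnxy (crel_mono (by linarith) (hEc x y h))
    exact Ncard_lt (lt_trans hr₁ hrc) (le_of_lt hcc') hxy' hnxyc
  -- conclude finiteness
  have hinj : Set.InjOn (fun c => Ncard X c) C := by
    intro a ha b hb hab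
    simp only at hab
    rcases lt_trichotomy a b with h | h | h
    · exact absurd hab (ne_of_gt (key a ha b hb h))
    · exact h
    · exact absurd hab (ne_of_lt (key b hb a ha h))
  have himg : ((fun c => Ncard X c) '' C).Finite :=
    Set.Finite.subset (Set.finite_Iic (Ncard X r₁)) (by
      rintro _ ⟨c, hc, rfl⟩
      exact Ncard_anti hr₁ (le_of_lt hc.1))
  exact Set.Finite.of_finite_image himg hinj
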